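/- Let A = ℂ[X₁,…,Xₙ], f ∈ A squarefree with A/(f) smooth. Then there exists an injective ℂ-algebra homomorphism ψ : A/(f) → Â, where Â is the completion of A with respect to the principal ideal (f), such that the composition of ψ with the canonical projection Â → A/(f) is the identity. -/

import Mathlib

open MvPolynomial

/-- The `(f)`-adic completion of a commutative `ℂ`-algebra `A`, realized as the
subalgebra of compatible families in `∀ ν, A ⧸ (f^ν)`. -/
def adicCompl (A : Type) [CommRing A] [Algebra ℂ A] (f : A) :
    Subalgebra ℂ (∀ ν : ℕ, A ⧸ Ideal.span {f ^ ν}) where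
  carrier := {x | ∀ ν : ℕ,
    Ideal.Quotient.factor (S := Ideal.span {f ^ (ν + 1)}) (T := Ideal.span {f ^ ν})
      (Ideal.span_singleton_le_span_singleton.mpr (pow_dvd_pow f (Nat.le_succ ν)))
      (x (ν + 1)) = x ν}
  mul_mem' := by
    intro a b ha hb ν
    simp only [Pi.mul_apply, map_mul, ha ν, hb ν]
  add_mem' := by
    intro a b ha hb ν
    simp only [Pi.add_apply, map_add, ha ν, hb ν]
  algebraMap_mem' := fun r ν => rfl

/-- The canonical projection from the `(f)`-adic completion onto `A/(f)`. -/
def adicComplProj (A : Type) [CommRing A] [Algebra ℂ A] (f : A) :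
    adicCompl A f →+* A ⧸ Ideal.span {f} :=
  (Ideal.Quotient.factor (S := Ideal.span {f ^ 1}) (T := Ideal.span {f})
      (le_of_eq (by rw [pow_one]))).comp
    ((Pi.evalRingHom _ 1).comp (adicCompl A f).val.toRingHom)

/-- Multivariate Taylor expansion to first order: substituting `Xᵢ + dᵢ` for `Xᵢ` in `p`
agrees with `p + ∑ dᵢ ∂ᵢp` modulo the square of the ideal generated by the `dᵢ`. -/
theorem mv_taylor {n : ℕ} (d : Fin n → MvPolynomial (Fin n) ℂ) (p : MvPolynomial (Fin n) ℂ) :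
    aeval (fun i => X i + d i) p - p - ∑ i, d i * pderiv i p ∈
      Ideal.span (Set.range d) ^ 2 := by
  induction p using MvPolynomial.induction_on with
  | C a => simp
  | add p q hp hq =>
      have : aeval (fun i => X i + d i) (p + q) - (p + q) - ∑ i, d i * pderiv i (p + q)
          = (aeval (fun i => X i + d i) p - p - ∑ i, d i * pderiv i p)
            + (aeval (fun i => X i + d i) q - q - ∑ i, d i * pderiv i q) := by
        simp only [map_add, mul_add, Finset.sum_add_distrib]; ring
      rw [this]; exact add_mem hp hq
  | mul_X p i hp =>
      classical
      have hdmem : ∀ j, d j ∈ Ideal.span (Set.range d) :=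
        fun j => Ideal.subset_span ⟨j, rfl⟩
      have hsum : ∑ j, d j * pderiv j (p * X i)
          = (∑ j, d j * pderiv j p) * X i + d i * p := by
        simp only [pderiv_mul, mul_add, Finset.sum_add_distrib, Finset.sum_mul, mul_assoc]
        congr 1
        rw [Finset.sum_eq_single i]
        · simp
        · intro j _ hj; simp [pderiv_X, Pi.single_apply, hj]
        · simp
      have key : aeval (fun i => X i + d i) (p * X i) - p * X i
            - ∑ j, d j * pderiv j (p * X i)
          = X i * (aeval (fun i => X i + d i) p - p - ∑ j, d j * pderiv j p)
            + d i * (aeval (fun i => X i + d i) p - p - ∑ j, d j * pderiv j p)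
            + ∑ j, (d i * d j) * pderiv j p := by
        rw [map_mul, aeval_X, hsum]
        rw [show ∑ j, (d i * d j) * pderiv j p = d i * ∑ j, d j * pderiv j p by
          rw [Finset.mul_sum]; simp [mul_assoc]]
        ring
      rw [key]
      refine add_mem (add_mem (Ideal.mul_mem_left _ _ hp) (Ideal.mul_mem_left _ _ hp)) ?_
      refine Ideal.sum_mem _ fun j _ => Ideal.mul_mem_right _ _ ?_
      rw [sq]; exact Ideal.mul_mem_mul (hdmem i) (hdmem j)

/-- From smoothness (empty singular locus), Nullstellensatz gives a representation
`1 = a * f + ∑ bᵢ * ∂ᵢ f`. -/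
theorem exists_jacobian_combination {n : ℕ} (f : MvPolynomial (Fin n) ℂ)
    (hsm : ∀ x : Fin n → ℂ,
      ¬ (eval x f = 0 ∧ ∀ i : Fin n, eval x (pderiv i f) = 0)) :
    ∃ (a : MvPolynomial (Fin n) ℂ) (b : Fin n → MvPolynomial (Fin n) ℂ),
      a * f + ∑ i, b i * pderiv i f = 1 := by
  classical
  set g : Option (Fin n) → MvPolynomial (Fin n) ℂ :=
    fun o => o.elim f (fun i => pderiv i f) with hg
  have htop : Ideal.span (Set.range g) = ⊤ := by
    rw [← Ideal.radical_eq_top, ← MvPolynomial.vanishingIdeal_zeroLocus_eq_radical (K := ℂ)]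
    have hz : MvPolynomial.zeroLocus ℂ (Ideal.span (Set.range g)) = ∅ := by
      ext x
      simp only [Set.mem_empty_iff_false, iff_false, MvPolynomial.mem_zeroLocus_iff]
      intro hx
      exact hsm x ⟨hx f (Ideal.subset_span ⟨none, rfl⟩),
        fun i => hx (pderiv i f) (Ideal.subset_span ⟨some i, rfl⟩)⟩
    rw [hz]
    exact MvPolynomial.vanishingIdeal_empty
  have h1 : (1 : MvPolynomial (Fin n) ℂ) ∈ Ideal.span (Set.range g) := htop ▸ trivial
  rw [Ideal.span, Submodule.mem_span_range_iff_exists_fun] at h1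
  obtain ⟨c, hc⟩ := h1
  refine ⟨c none, fun i => c (some i), ?_⟩
  rw [← hc, Fintype.sum_option]
  simp [hg, smul_eq_mul]

/-- The Newton-step substitution kills `f` modulo `(f)²` and is the identity modulo `(f)`. -/
theorem newton_step {n : ℕ} (f : MvPolynomial (Fin n) ℂ)
    (a : MvPolynomial (Fin n) ℂ) (b : Fin n → MvPolynomial (Fin n) ℂ)
    (hab : a * f + ∑ i, b i * pderiv i f = 1) :
    (aeval (fun i => X i - b i * f) f ∈ Ideal.span {f} ^ 2) ∧
    (∀ p : MvPolynomial (Fin n) ℂ,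
      aeval (fun i => X i - b i * f) p - p ∈ Ideal.span {f}) := by
  set d : Fin n → MvPolynomial (Fin n) ℂ := fun i => -(b i * f) with hd
  have hsubst : (fun i => X i - b i * f) = fun i => X i + d i := by
    funext i; simp [hd, sub_eq_add_neg]
  have hle : Ideal.span (Set.range d) ≤ Ideal.span {f} := by
    rw [Ideal.span_le]
    rintro _ ⟨i, rfl⟩
    exact Ideal.mem_span_singleton.mpr ⟨-(b i), by ring⟩
  have hle2 : Ideal.span (Set.range d) ^ 2 ≤ Ideal.span {f} ^ 2 :=
    Ideal.pow_right_mono hle 2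
  constructor
  · have ht := mv_taylor d f
    have heq : aeval (fun i => X i + d i) f
        = (aeval (fun i => X i + d i) f - f - ∑ i, d i * pderiv i f) + a * f * f := by
      have : ∑ i, d i * pderiv i f = -(f * ∑ i, b i * pderiv i f) := by
        rw [Finset.mul_sum, ← Finset.sum_neg_distrib]
        exact Finset.sum_congr rfl fun i _ => by simp [hd]; ring
      rw [this]
      have h2 : ∑ i, b i * pderiv i f = 1 - a * f := by linear_combination hab
      rw [h2]; ring
    rw [hsubst, heq]
    refine add_mem (hle2 ht) ?_
    rw [sq]
    exact Ideal.mul_mem_mul (Ideal.mem_span_singleton.mpr ⟨a, mul_comm _ _⟩)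
      (Ideal.mem_span_singleton.mpr dvd_rfl)
  · intro p
    have ht := mv_taylor d p
    have heq : aeval (fun i => X i + d i) p - p
        = (aeval (fun i => X i + d i) p - p - ∑ i, d i * pderiv i p)
          + ∑ i, d i * pderiv i p := by ring
    rw [hsubst, heq]
    refine add_mem (Ideal.pow_le_self two_ne_zero (hle2 ht)) ?_
    refine Ideal.sum_mem _ fun i _ => ?_
    exact Ideal.mul_mem_right _ _ (hle (Ideal.subset_span ⟨i, rfl⟩))

set_option maxHeartbeats 1000000 in
theorem formallySmooth_quot {n : ℕ} (f : MvPolynomial (Fin n) ℂ)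
    (hsm : ∀ x : Fin n → ℂ,
      ¬ (eval x f = 0 ∧ ∀ i : Fin n, eval x (pderiv i f) = 0)) :
    Algebra.FormallySmooth ℂ (MvPolynomial (Fin n) ℂ ⧸ Ideal.span {f}) := by
  obtain ⟨a, b, hab⟩ := exists_jacobian_combination f hsm
  obtain ⟨hf2, hid⟩ := newton_step f a b hab
  have hker : ∀ p ∈ Ideal.span {f},
      ((Ideal.Quotient.mkₐ ℂ (Ideal.span {f} ^ 2)).comp
        (aeval (fun i => X i - b i * f))) p = 0 := by
    intro p hp
    obtain ⟨c, rfl⟩ := Ideal.mem_span_singleton'.mp hp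
    simp only [AlgHom.comp_apply, map_mul, Ideal.Quotient.mkₐ_eq_mk]
    rw [Ideal.Quotient.eq_zero_iff_mem.mpr hf2, mul_zero]
  have hkereq : Ideal.span {f} ^ 2
      = RingHom.ker (Ideal.Quotient.mkₐ ℂ (Ideal.span {f})).toRingHom ^ 2 := by
    rw [AlgHom.toRingHom_eq_coe, Ideal.Quotient.mkₐ_ker]
  refine Algebra.FormallySmooth.of_split (Ideal.Quotient.mkₐ ℂ (Ideal.span {f}))
    ((Ideal.quotientEquivAlgOfEq ℂ hkereq).toAlgHom.comp
      (Ideal.Quotient.liftₐ (Ideal.span {f})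
        ((Ideal.Quotient.mkₐ ℂ (Ideal.span {f} ^ 2)).comp
          (aeval (fun i => X i - b i * f))) hker)) ?_
  ext x
  obtain ⟨p, rfl⟩ := Ideal.Quotient.mk_surjective x
  simp only [AlgHom.comp_apply, AlgHom.id_apply, AlgEquiv.toAlgHom_eq_coe, AlgHom.coe_coe,
    Ideal.Quotient.liftₐ_apply, Ideal.Quotient.lift_mk, RingHom.coe_coe,
    Ideal.Quotient.mkₐ_eq_mk, Ideal.quotientEquivAlgOfEq_mk]
  show (Ideal.Quotient.mkₐ ℂ (Ideal.span {f})).kerSquareLift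
      (Ideal.Quotient.mk _ ((aeval (fun i => X i - b i * f)) p)) = _
  rw [show ((Ideal.Quotient.mkₐ ℂ (Ideal.span {f})).kerSquareLift)
        (Ideal.Quotient.mk _ ((aeval (fun i => X i - b i * f)) p))
      = Ideal.Quotient.mk (Ideal.span {f}) ((aeval (fun i => X i - b i * f)) p) from rfl]
  rw [Ideal.Quotient.eq]
  exact hid p

theorem tower_nil {A : Type} [CommRing A] [Algebra ℂ A] (f : A) (ν : ℕ) :
    IsNilpotent (Ideal.map (Ideal.Quotient.mkₐ ℂ (Ideal.span {f ^ (ν + 2)}))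
      (Ideal.span {f ^ (ν + 1)})) := by
  refine ⟨2, ?_⟩
  have h2 : (Ideal.span {f ^ (ν + 1)}) ^ 2 ≤ Ideal.span {f ^ (ν + 2)} := by
    rw [Ideal.span_singleton_pow]
    refine Ideal.span_singleton_le_span_singleton.mpr ?_
    rw [← pow_mul]
    exact pow_dvd_pow f (by omega)
  have : Ideal.map (Ideal.Quotient.mkₐ ℂ (Ideal.span {f ^ (ν + 2)}))
      (Ideal.span {f ^ (ν + 1)}) ^ 2 = ⊥ := by
    rw [← Ideal.map_pow]
    rw [eq_bot_iff]
    refine Ideal.map_le_iff_le_comap.mpr fun x hx => ?_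
    simp only [Ideal.mem_comap, Ideal.mem_bot, Ideal.Quotient.mkₐ_eq_mk,
      Ideal.Quotient.eq_zero_iff_mem]
    exact h2 hx
  simpa using this

/-- The compatible system of lifts `A/(f) → A/(f^ν)` built by formal smoothness. -/
noncomputable def tower {A : Type} [CommRing A] [Algebra ℂ A] (f : A)
    [Algebra.FormallySmooth ℂ (A ⧸ Ideal.span {f})] :
    ∀ ν : ℕ, (A ⧸ Ideal.span {f}) →ₐ[ℂ] A ⧸ Ideal.span {f ^ ν}
  | 0 => Ideal.Quotient.liftₐ (Ideal.span {f}) (Ideal.Quotient.mkₐ ℂ (Ideal.span {f ^ 0}))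
      (fun a _ => by
        haveI : Subsingleton (A ⧸ Ideal.span {f ^ 0}) :=
          Ideal.Quotient.subsingleton_iff.mpr (by rw [pow_zero, Ideal.span_singleton_one])
        exact Subsingleton.elim _ _)
  | 1 => (Ideal.quotientEquivAlgOfEq ℂ (by rw [pow_one])).toAlgHom
  | (ν + 2) =>
      Algebra.FormallySmooth.lift
        (Ideal.map (Ideal.Quotient.mkₐ ℂ (Ideal.span {f ^ (ν + 2)})) (Ideal.span {f ^ (ν + 1)}))
        (tower_nil f ν)
        (((DoubleQuot.quotQuotEquivQuotOfLEₐ ℂ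
            (Ideal.span_singleton_le_span_singleton.mpr
              (pow_dvd_pow f (Nat.le_succ (ν + 1))))).symm.toAlgHom).comp (tower f (ν + 1)))

theorem tower_compat {A : Type} [CommRing A] [Algebra ℂ A] (f : A)
    [Algebra.FormallySmooth ℂ (A ⧸ Ideal.span {f})] (ν : ℕ)
    (x : A ⧸ Ideal.span {f}) :
    Ideal.Quotient.factor (S := Ideal.span {f ^ (ν + 1)}) (T := Ideal.span {f ^ ν})
      (Ideal.span_singleton_le_span_singleton.mpr (pow_dvd_pow f (Nat.le_succ ν)))
      (tower f (ν + 1) x) = tower f ν x := by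
  match ν with
  | 0 =>
      haveI : Subsingleton (A ⧸ Ideal.span {f ^ 0}) :=
        Ideal.Quotient.subsingleton_iff.mpr (by rw [pow_zero, Ideal.span_singleton_one])
      exact Subsingleton.elim _ _
  | (ν + 1) =>
      set h : Ideal.span {f ^ (ν + 2)} ≤ Ideal.span {f ^ (ν + 1)} :=
        Ideal.span_singleton_le_span_singleton.mpr (pow_dvd_pow f (Nat.le_succ (ν + 1)))
      have hfac : ∀ y : A ⧸ Ideal.span {f ^ (ν + 2)},
          Ideal.Quotient.factor (S := Ideal.span {f ^ (ν + 2)}) (T := Ideal.span {f ^ (ν + 1)}) h y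
          = DoubleQuot.quotQuotEquivQuotOfLEₐ ℂ h
              (Ideal.Quotient.mk
                (Ideal.map (Ideal.Quotient.mkₐ ℂ (Ideal.span {f ^ (ν + 2)}))
                  (Ideal.span {f ^ (ν + 1)})) y) := by
        intro y
        obtain ⟨p, rfl⟩ := Ideal.Quotient.mk_surjective y
        rw [Ideal.Quotient.factor_mk]
        rfl
      rw [show tower f (ν + 2) = Algebra.FormallySmooth.lift
            (Ideal.map (Ideal.Quotient.mkₐ ℂ (Ideal.span {f ^ (ν + 2)}))
              (Ideal.span {f ^ (ν + 1)}))
            (tower_nil f ν)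
            (((DoubleQuot.quotQuotEquivQuotOfLEₐ ℂ h).symm.toAlgHom).comp (tower f (ν + 1)))
          from rfl]
      rw [hfac, Algebra.FormallySmooth.mk_lift]
      simp
      exact (DoubleQuot.quotQuotEquivQuotOfLE h).apply_symm_apply _

set_option maxHeartbeats 1000000 in
theorem section_of_projection_to_completion
    (n : ℕ) (f : MvPolynomial (Fin n) ℂ) (hsf : Squarefree f)
    (hsm : ∀ x : Fin n → ℂ,
      ¬ (eval x f = 0 ∧ ∀ i : Fin n, eval x (pderiv i f) = 0)) :
    ∃ ψ : (MvPolynomial (Fin n) ℂ ⧸ Ideal.span {f}) →ₐ[ℂ]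
        adicCompl (MvPolynomial (Fin n) ℂ) f,
      Function.Injective ψ ∧
      (adicComplProj (MvPolynomial (Fin n) ℂ) f).comp ψ.toRingHom = RingHom.id _ := by
  haveI := formallySmooth_quot f hsm
  have hmem : ∀ x : MvPolynomial (Fin n) ℂ ⧸ Ideal.span {f},
      Pi.algHom (R := ℂ) (A := fun ν => MvPolynomial (Fin n) ℂ ⧸ Ideal.span {f ^ ν})
        (fun ν => tower f ν) x ∈ adicCompl (MvPolynomial (Fin n) ℂ) f :=
    fun x ν => tower_compat f ν x
  have hsplit : (adicComplProj (MvPolynomial (Fin n) ℂ) f).comp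
      (AlgHom.codRestrict _ (adicCompl (MvPolynomial (Fin n) ℂ) f) hmem).toRingHom
      = RingHom.id _ := by
    refine RingHom.ext fun x => ?_
    obtain ⟨p, rfl⟩ := Ideal.Quotient.mk_surjective x
    show Ideal.Quotient.factor (S := Ideal.span {f ^ 1}) (T := Ideal.span {f})
        (le_of_eq (by rw [pow_one]))
        (tower f 1 (Ideal.Quotient.mk _ p)) = _
    rw [show tower f 1 = (Ideal.quotientEquivAlgOfEq ℂ
        (show Ideal.span {f} = Ideal.span {f ^ 1} by rw [pow_one])).toAlgHom from rfl]
    simp only [AlgEquiv.toAlgHom_eq_coe, AlgHom.coe_coe, Ideal.quotientEquivAlgOfEq_mk,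
      Ideal.Quotient.factor_mk, RingHom.id_apply]
    rfl
  refine ⟨AlgHom.codRestrict _ (adicCompl (MvPolynomial (Fin n) ℂ) f) hmem, ?_, hsplit⟩
  intro x y hxy
  have hx := RingHom.congr_fun hsplit x
  have hy := RingHom.congr_fun hsplit y
  simp only [RingHom.comp_apply, RingHom.id_apply] at hx hy
  rw [← hx, ← hy]
  exact congrArg _ hxy
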